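/- The holomorphic vector field X = zw∂/∂z − iz^2∂/∂ζ + w^2∂/∂w (the generator of the weight-2 component g_2) is an infinitesimal automorphism of the model hypersurface {Im w = P}: Re((1/(2i))w^2 − zwP_z + iz^2P_ζ) = 0 whenever Im w = P(z,ζ,\bar z,\bar ζ). -/

import Mathlib

open Complex

noncomputable def P4 (z ζ zb ζb : ℂ) : ℂ :=
  (z * zb + (z ^ 2 * ζb + zb ^ 2 * ζ) / 2) / (1 - ζ * ζb)

noncomputable def Pz (z ζ zb ζb : ℂ) : ℂ :=
  deriv (fun s => P4 s ζ zb ζb) z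

noncomputable def Pzeta (z ζ zb ζb : ℂ) : ℂ :=
  deriv (fun s => P4 z s zb ζb) ζ

lemma Pz_eq (z ζ zb ζb : ℂ) :
    Pz z ζ zb ζb = (zb + z * ζb) / (1 - ζ * ζb) := by
  have a : HasDerivAt (fun s : ℂ => s * zb) zb z := by
    simpa using (hasDerivAt_id z).mul_const zb
  have b : HasDerivAt (fun s : ℂ => (s ^ 2 * ζb + zb ^ 2 * ζ) / 2) (z * ζb) z := by
    have h := (((hasDerivAt_pow 2 z).mul_const ζb).add_const (zb ^ 2 * ζ)).div_const 2
    refine h.congr_deriv ?_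
    rw [show (2:ℕ) - 1 = 1 from rfl]; push_cast; ring
  have h := (a.add b).div_const (1 - ζ * ζb)
  simpa [Pz, P4] using h.deriv

lemma Pzeta_eq (z ζ zb ζb : ℂ) (h : 1 - ζ * ζb ≠ 0) :
    Pzeta z ζ zb ζb =
      ((zb ^ 2 / 2) * (1 - ζ * ζb) + (z * zb + (z ^ 2 * ζb + zb ^ 2 * ζ) / 2) * ζb)
        / (1 - ζ * ζb) ^ 2 := by
  have a : HasDerivAt (fun s : ℂ => zb ^ 2 * s) (zb ^ 2) ζ := by
    simpa using (hasDerivAt_id ζ).const_mul (zb ^ 2)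
  have b : HasDerivAt (fun s : ℂ => (z ^ 2 * ζb + zb ^ 2 * s) / 2) (zb ^ 2 / 2) ζ :=
    (a.const_add (z ^ 2 * ζb)).div_const 2
  have hN : HasDerivAt (fun s : ℂ => z * zb + (z ^ 2 * ζb + zb ^ 2 * s) / 2)
      (zb ^ 2 / 2) ζ := b.const_add (z * zb)
  have hD : HasDerivAt (fun s : ℂ => 1 - s * ζb) (-ζb) ζ := by
    simpa using ((hasDerivAt_id ζ).mul_const ζb).const_sub 1
  have h' := hN.div hD h
  have hder := h'.deriv
  rw [Pzeta]
  simp only [P4]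
  refine hder.trans ?_
  ring

set_option maxHeartbeats 1000000 in
/-- the field `X = zw∂/∂z - iz²∂/∂ζ + w²∂/∂w` (the generator of
`g₂`) is an infinitesimal automorphism of `{Im w = P}`:
`Re((1/(2i))w² - zwP_z + iz²P_ζ) = 0` for `w = u + iP`, all real `u`. -/
theorem infinitesimal_autom_g2 (z ζ : ℂ) (u : ℝ) (hζ : ‖ζ‖ < 1) :
    (((1 / (2 * I)) * ((u : ℂ) + I * P4 z ζ ((starRingEnd ℂ) z) ((starRingEnd ℂ) ζ)) ^ 2
      - z * ((u : ℂ) + I * P4 z ζ ((starRingEnd ℂ) z) ((starRingEnd ℂ) ζ)) * Pz z ζ ((starRingEnd ℂ) z) ((starRingEnd ℂ) ζ)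
      + I * z ^ 2 * Pzeta z ζ ((starRingEnd ℂ) z) ((starRingEnd ℂ) ζ))).re = 0 := by
  have h2c : (starRingEnd ℂ) 2 = (2 : ℂ) := map_ofNat _ 2
  set zb := (starRingEnd ℂ) z with hzb
  set ζb := (starRingEnd ℂ) ζ with hζb
  have hczb : (starRingEnd ℂ) zb = z := by rw [hzb, Complex.conj_conj]
  have hcζb : (starRingEnd ℂ) ζb = ζ := by rw [hζb, Complex.conj_conj]
  have hd : (1 : ℂ) - ζ * ζb ≠ 0 := by
    have hden : (1 : ℂ) - ζ * ζb = ((1 - Complex.normSq ζ : ℝ) : ℂ) := by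
      rw [hζb, Complex.mul_conj]; push_cast; ring
    have hpos : (0:ℝ) < 1 - Complex.normSq ζ := by
      have := Complex.sq_norm ζ
      nlinarith [norm_nonneg ζ]
    rw [hden]
    exact_mod_cast ne_of_gt hpos
  rw [Pz_eq, Pzeta_eq _ _ _ _ hd]
  simp only [P4]
  set n := z * zb + (z ^ 2 * ζb + zb ^ 2 * ζ) / 2 with hn
  set d := (1 : ℂ) - ζ * ζb with hdd
  have hcn : (starRingEnd ℂ) n = n := by
    rw [hn]
    simp only [map_add, map_mul, map_div₀, map_pow, hczb, hcζb, h2c]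
    ring
  have hcd : (starRingEnd ℂ) d = d := by
    rw [hdd]
    simp only [map_sub, map_one, map_mul, hcζb]
    ring
  have hre : ∀ x : ℂ, x + (starRingEnd ℂ) x = 0 → x.re = 0 := by
    intro x hx
    have h2 := Complex.add_conj x
    rw [hx] at h2
    have h3 : ((2 * x.re : ℝ) : ℂ) = 0 := by exact h2.symm
    have h4 : (2 * x.re : ℝ) = 0 := by exact_mod_cast h3
    linarith
  apply hre
  simp only [map_add, map_sub, map_mul, map_div₀, map_pow, map_one, map_neg, hcn, hcd,
    hczb, hcζb, Complex.conj_I, Complex.conj_ofReal, h2c, ← hzb, ← hζb]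
  clear_value n d zb ζb
  clear hdd hzb hζb hcn hcd hczb hcζb hζ
  have hI : I ≠ 0 := Complex.I_ne_zero
  field_simp
  rw [hn]
  ring
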